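/- Let G = (V, E) be a strongly-connected digraph with |V| ≥ 2 that is MaxPSS-disjoint, and let H be the quotient digraph on the set of MaxPSSs of V (with an arc (X, X') whenever X ≠ X' and some edge of G goes from X to X'). Then for q = number of MaxPSSs, H contains no simple cycle of length ℓ with 2 ≤ ℓ < q, and H contains a Hamiltonian cycle. -/

import Mathlib

variable {V : Type*}

/-- Reachability within `S` using edges of `E` whose both endpoints lie in `S`. -/
def ReachIn (E : V → V → Prop) (S : Set V) : V → V → Prop :=
  Relation.ReflTransGen (fun a b => E a b ∧ a ∈ S ∧ b ∈ S)

/-- The induced subgraph `G[S]` is strongly connected. -/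
def StrongConn (E : V → V → Prop) (S : Set V) : Prop :=
  ∀ u ∈ S, ∀ v ∈ S, ReachIn E S u v

/-- `X` is a MaxPSS of `V` in the strongly-connected system of `G`:
a maximal nonempty proper subset of `V` inducing a strongly-connected subgraph. -/
def IsMaxPSSg (G : V → V → Prop) (X : Set V) : Prop :=
  X.Nonempty ∧ X ⊂ Set.univ ∧ StrongConn G X ∧
    ∀ Z : Set V, Z.Nonempty → Z ⊂ Set.univ → StrongConn G Z → X ⊆ Z → Z = X

/-- `G` is MaxPSS-disjoint. -/
def MaxPSSDisjG (G : V → V → Prop) : Prop :=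
  ∀ X X', IsMaxPSSg G X → IsMaxPSSg G X' → X ≠ X' → X ∩ X' = ∅

/-- Arc of the quotient digraph `H_G` between two distinct vertex subsets. -/
def QArc (G : V → V → Prop) (A B : Set V) : Prop :=
  A ≠ B ∧ ∃ u ∈ A, ∃ v ∈ B, G u v

open Relation

lemma reachIn_mono {E : V → V → Prop} {S T : Set V} (h : S ⊆ T) {u v : V}
    (hr : ReachIn E S u v) : ReachIn E T u v :=
  ReflTransGen.mono (r := fun a b => E a b ∧ a ∈ S ∧ b ∈ S) (p := fun a b => E a b ∧ a ∈ T ∧ b ∈ T)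
    (fun _ _ hab => ⟨hab.1, h hab.2.1, h hab.2.2⟩) _ _ hr

lemma maxpss_unique {G : V → V → Prop} (hdisj : MaxPSSDisjG G) {X Y : Set V} {v : V}
    (hX : IsMaxPSSg G X) (hY : IsMaxPSSg G Y) (hvX : v ∈ X) (hvY : v ∈ Y) : X = Y := by
  by_contra h
  have := hdisj X Y hX hY h
  rw [Set.eq_empty_iff_forall_notMem] at this
  exact this v ⟨hvX, hvY⟩

lemma cycle_covers (G : V → V → Prop) (hdisj : MaxPSSDisjG G)
    (ℓ : ℕ) (hℓ : 2 ≤ ℓ) (c : ZMod ℓ → Set V) (hinj : Function.Injective c)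
    (hmax : ∀ i, IsMaxPSSg G (c i)) (harc : ∀ i, QArc G (c i) (c (i + 1))) :
    ∀ X, IsMaxPSSg G X → ∃ i, c i = X := by
  haveI : NeZero ℓ := ⟨by omega⟩
  haveI : Fact (1 < ℓ) := ⟨by omega⟩
  set Z : Set V := ⋃ i, c i with hZ
  have hsub : ∀ i, c i ⊆ Z := fun i => Set.subset_iUnion c i
  have hstep : ∀ i, ∀ u ∈ c i, ∀ v ∈ c (i+1), ReachIn G Z u v := by
    intro i u hu v hv
    obtain ⟨-, a, ha, b, hb, hab⟩ := harc i
    have h1 : ReachIn G Z u a := reachIn_mono (hsub i) ((hmax i).2.2.1 u hu a ha)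
    have h2 : ReachIn G Z b v := reachIn_mono (hsub (i+1)) ((hmax (i+1)).2.2.1 b hb v hv)
    exact h1.trans (ReflTransGen.head ⟨hab, hsub i ha, hsub (i+1) hb⟩ h2)
  have hiter : ∀ n : ℕ, ∀ i : ZMod ℓ, ∀ u ∈ c i, ∀ v ∈ c (i + (n : ZMod ℓ)), ReachIn G Z u v := by
    intro n
    induction n with
    | zero =>
      intro i u hu v hv
      exact reachIn_mono (hsub i) ((hmax i).2.2.1 u hu v (by simpa using hv))
    | succ n ih =>
      intro i u hu v hv
      obtain ⟨m, hm⟩ := (hmax (i + (n : ZMod ℓ))).1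
      have hc : (i + ((n+1 : ℕ) : ZMod ℓ)) = (i + (n : ZMod ℓ)) + 1 := by push_cast; ring
      rw [hc] at hv
      exact (ih i u hu m hm).trans (hstep (i + (n : ZMod ℓ)) m hm v hv)
  have hZSC : StrongConn G Z := by
    intro u hu v hv
    simp only [hZ, Set.mem_iUnion] at hu hv
    obtain ⟨i, hui⟩ := hu
    obtain ⟨j, hvj⟩ := hv
    have hij : i + (((j - i).val : ℕ) : ZMod ℓ) = j := by
      rw [ZMod.natCast_val, ZMod.cast_id]; ring
    exact hiter (j - i).val i u hui v (by rw [hij]; exact hvj)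
  have hZne : Z.Nonempty := by
    obtain ⟨x, hx⟩ := (hmax 0).1
    exact ⟨x, hsub 0 hx⟩
  have hZuniv : Z = Set.univ := by
    by_contra hne
    have hZprop : Z ⊂ Set.univ := Set.ssubset_univ_iff.mpr hne
    have hZ0 : Z = c 0 := (hmax 0).2.2.2 Z hZne hZprop hZSC (hsub 0)
    obtain ⟨x, hx⟩ := (hmax 1).1
    have hx0 : x ∈ c 0 := hZ0 ▸ hsub 1 hx
    have hne01 : c 0 ≠ c 1 := fun h => zero_ne_one (hinj h)
    have := hdisj (c 0) (c 1) (hmax 0) (hmax 1) hne01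
    rw [Set.eq_empty_iff_forall_notMem] at this
    exact this x ⟨hx0, hx⟩
  intro X hX
  obtain ⟨x, hx⟩ := hX.1
  have hxZ : x ∈ Z := hZuniv ▸ Set.mem_univ x
  simp only [hZ, Set.mem_iUnion] at hxZ
  obtain ⟨i, hxi⟩ := hxZ
  exact ⟨i, maxpss_unique hdisj (hmax i) hX hxi hx⟩

lemma exists_maxpss_mem [Fintype V] (G : V → V → Prop) (hcard : 2 ≤ Fintype.card V) (v : V) :
    ∃ X, IsMaxPSSg G X ∧ v ∈ X := by
  haveI : Nontrivial V := Fintype.one_lt_card_iff_nontrivial.mp (by omega)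
  set s : Set (Set V) := {Z | Z.Nonempty ∧ Z ⊂ Set.univ ∧ StrongConn G Z ∧ v ∈ Z} with hs
  have hfin : s.Finite := Set.toFinite s
  have hne : s.Nonempty := by
    refine ⟨{v}, ⟨v, rfl⟩, ?_, ?_, rfl⟩
    · refine Set.ssubset_univ_iff.mpr (fun h => ?_)
      obtain ⟨w, hw⟩ := exists_ne v
      exact hw (Set.mem_singleton_iff.mp (h.symm ▸ Set.mem_univ w))
    · intro a ha b hb
      rw [Set.mem_singleton_iff] at ha hb
      subst ha; subst hb
      exact Relation.ReflTransGen.refl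
  obtain ⟨X, hXs, hXmax⟩ : ∃ X ∈ s, ∀ Z ∈ s, X ⊆ Z → X = Z :=
    let ⟨X, hX⟩ := Set.Finite.exists_maximal hfin hne
    ⟨X, hX.1, fun Z hZ h => le_antisymm h (hX.2 hZ h)⟩
  refine ⟨X, ⟨hXs.1, hXs.2.1, hXs.2.2.1, fun Z hZn hZp hZSC hXZ => ?_⟩, hXs.2.2.2⟩
  exact (hXmax Z ⟨hZn, hZp, hZSC, hXZ hXs.2.2.2⟩ hXZ).symm

lemma transGen_walk {α : Type*} {r : α → α → Prop} {A B : α} (h : Relation.TransGen r A B) :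
    ∃ (n : ℕ) (f : ℕ → α), 1 ≤ n ∧ f 0 = A ∧ f n = B ∧ ∀ i < n, r (f i) (f (i+1)) := by
  induction h with
  | single hab =>
    refine ⟨1, fun i => if i = 0 then A else _, le_refl 1, if_pos rfl, if_neg one_ne_zero, ?_⟩
    intro i hi
    interval_cases i
    simpa using hab
  | @tail b c h₁ h₂ ih =>
    obtain ⟨n, f, hn, hf0, hfn, harcs⟩ := ih
    refine ⟨n+1, fun i => if i ≤ n then f i else c, by omega, ?_, ?_, ?_⟩
    · simpa using hf0
    · simp
    · intro i hi
      by_cases hin : i < n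
      · simp only [if_pos (by omega : i ≤ n), if_pos (by omega : i + 1 ≤ n)]
        exact harcs i hin
      · have hieq : i = n := by omega
        simp only [hieq, if_pos (le_refl n), if_neg (by omega : ¬ n + 1 ≤ n)]
        exact hfn ▸ h₂

lemma reach_to_transGen (G : V → V → Prop) (blk : V → Set V)
    (hblk₁ : ∀ v, IsMaxPSSg G (blk v)) (hblk₂ : ∀ v, v ∈ blk v)
    {u w : V} (h : ReachIn G Set.univ u w) :
    blk u = blk w ∨ Relation.TransGen
      (fun A B => IsMaxPSSg G A ∧ IsMaxPSSg G B ∧ QArc G A B) (blk u) (blk w) := by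
  induction h with
  | refl => exact Or.inl rfl
  | @tail b c h₁ h₂ ih =>
    by_cases hbc : blk b = blk c
    · rw [hbc] at ih; exact ih
    · have harc : IsMaxPSSg G (blk b) ∧ IsMaxPSSg G (blk c) ∧ QArc G (blk b) (blk c) :=
        ⟨hblk₁ b, hblk₁ c, hbc, b, hblk₂ b, c, hblk₂ c, h₂.1⟩
      rcases ih with heq | ht
      · exact Or.inr (heq ▸ Relation.TransGen.single harc)
      · exact Or.inr (ht.tail harc)

lemma exists_ham [Fintype V] (G : V → V → Prop)
    (hcard : 2 ≤ Fintype.card V) (hSC : StrongConn G Set.univ) (hdisj : MaxPSSDisjG G) :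
    ∃ (N : ℕ) (f : ℕ → Set V), 2 ≤ N ∧ f 0 = f N ∧
      (∀ i ≤ N, IsMaxPSSg G (f i)) ∧ (∀ i < N, QArc G (f i) (f (i+1))) ∧
      ∀ i j, i < j → j ≤ N → f i = f j → i = 0 ∧ j = N := by
  classical
  set r : Set V → Set V → Prop :=
    fun A B => IsMaxPSSg G A ∧ IsMaxPSSg G B ∧ QArc G A B with hr
  have hblk : ∀ v : V, ∃ X, IsMaxPSSg G X ∧ v ∈ X := exists_maxpss_mem G hcard
  set blk : V → Set V := fun v => (hblk v).choose with hblkdef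
  have hblk₁ : ∀ v, IsMaxPSSg G (blk v) := fun v => (hblk v).choose_spec.1
  have hblk₂ : ∀ v, v ∈ blk v := fun v => (hblk v).choose_spec.2
  have htg : ∀ A B : Set V, IsMaxPSSg G A → IsMaxPSSg G B → A ≠ B →
      Relation.TransGen r A B := by
    intro A B hA hB hAB
    obtain ⟨a, ha⟩ := hA.1
    obtain ⟨b, hb⟩ := hB.1
    have h := reach_to_transGen G blk hblk₁ hblk₂ (hSC a (Set.mem_univ a) b (Set.mem_univ b))
    have hbA : blk a = A := maxpss_unique hdisj (hblk₁ a) hA (hblk₂ a) ha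
    have hbB : blk b = B := maxpss_unique hdisj (hblk₁ b) hB (hblk₂ b) hb
    rw [hbA, hbB] at h
    exact h.resolve_left hAB
  -- two distinct MaxPSSs
  obtain ⟨v⟩ : Nonempty V := Fintype.card_pos_iff.mp (by omega)
  obtain ⟨A, hA, hvA⟩ := hblk v
  obtain ⟨w, -, hwA⟩ := Set.exists_of_ssubset hA.2.1
  obtain ⟨B, hB, hwB⟩ := hblk w
  have hABne : A ≠ B := fun h => hwA (h ▸ hwB)
  -- closed walk
  obtain ⟨n, f₁, hn, hf₁0, hf₁n, harc₁⟩ := transGen_walk (htg A B hA hB hABne)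
  obtain ⟨m, f₂, hm, hf₂0, hf₂m, harc₂⟩ := transGen_walk (htg B A hB hA (Ne.symm hABne))
  set h : ℕ → Set V := fun i => if i ≤ n then f₁ i else f₂ (i - n) with hhdef
  have hclosed : h 0 = h (n + m) := by
    simp only [hhdef, if_pos (Nat.zero_le n), if_neg (by omega : ¬ n + m ≤ n)]
    rw [hf₁0, show n + m - n = m by omega, hf₂m]
  have harcs : ∀ i < n + m, r (h i) (h (i+1)) := by
    intro i hi
    rcases lt_trichotomy i n with hlt | heq | hgt
    · simp only [hhdef, if_pos (by omega : i ≤ n), if_pos (by omega : i + 1 ≤ n)]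
      exact harc₁ i hlt
    · simp only [hhdef, heq, if_pos (le_refl n), if_neg (by omega : ¬ n + 1 ≤ n),
        show n + 1 - n = 1 by omega]
      rw [hf₁n, ← hf₂0]
      exact harc₂ 0 (by omega)
    · simp only [hhdef, if_neg (by omega : ¬ i ≤ n), if_neg (by omega : ¬ i + 1 ≤ n),
        show i + 1 - n = (i - n) + 1 by omega]
      exact harc₂ (i - n) (by omega)
  have hA0 : h 0 = A := by simp only [hhdef, if_pos (Nat.zero_le n)]; exact hf₁0
  -- minimal closed walk
  set P : ℕ → Prop := fun k => 1 ≤ k ∧ ∃ g : ℕ → Set V, g 0 = g k ∧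
    (∀ i ≤ k, IsMaxPSSg G (g i)) ∧ ∀ i < k, QArc G (g i) (g (i+1)) with hP
  have hPex : ∃ k, P k := by
    refine ⟨n + m, by omega, h, hclosed, ?_, fun i hi => (harcs i hi).2.2⟩
    intro i hi
    rcases eq_or_lt_of_le hi with heq | hlt
    · rw [heq, ← hclosed, hA0]; exact hA
    · exact (harcs i hlt).1
  set N := Nat.find hPex with hN
  obtain ⟨hN1, g, hg0, hgmax, hgarc⟩ := Nat.find_spec hPex
  have hN2 : 2 ≤ N := by
    rcases eq_or_lt_of_le hN1 with heq | hlt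
    · exact absurd hg0 (by rw [← heq] at hgarc ⊢; exact (hgarc 0 (by omega)).1)
    · omega
  refine ⟨N, g, hN2, hg0, hgmax, hgarc, ?_⟩
  intro i j hij hjN hgij
  by_contra hcon
  have hji : j - i < N := by omega
  have : P (j - i) := by
    refine ⟨by omega, fun k => g (i + k), ?_, ?_, ?_⟩
    · simp only [Nat.add_zero, show i + (j - i) = j by omega]; exact hgij
    · intro k hk; exact hgmax (i + k) (by omega)
    · intro k hk
      show QArc G (g (i + k)) (g (i + (k + 1)))
      rw [show i + (k + 1) = (i + k) + 1 by omega]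
      exact hgarc (i + k) (by omega)
  exact Nat.find_min hPex hji this

theorem stmt_15 [Fintype V] (G : V → V → Prop)
    (hcard : 2 ≤ Fintype.card V) (hSC : StrongConn G Set.univ)
    (hdisj : MaxPSSDisjG G) :
    ((∀ ℓ : ℕ, 2 ≤ ℓ → ∀ c : ZMod ℓ → Set V, Function.Injective c →
        (∀ i, IsMaxPSSg G (c i)) → (∀ i, QArc G (c i) (c (i + 1))) →
        ∀ X, IsMaxPSSg G X → ∃ i, c i = X) ∧
      (∃ (ℓ : ℕ) (c : ZMod ℓ → Set V), 0 < ℓ ∧ Function.Injective c ∧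
        (∀ X, IsMaxPSSg G X ↔ ∃ i, c i = X) ∧
        ∀ i, QArc G (c i) (c (i + 1)))) := by
  classical
  refine ⟨fun ℓ hℓ c hinj hmax harc => cycle_covers G hdisj ℓ hℓ c hinj hmax harc, ?_⟩
  obtain ⟨N, f, hN2, hclosed, hmaxf, harcf, hdist⟩ := exists_ham G hcard hSC hdisj
  haveI : NeZero N := ⟨by omega⟩
  haveI : Fact (1 < N) := ⟨by omega⟩
  set c : ZMod N → Set V := fun k => f k.val with hc
  have hcmax : ∀ i, IsMaxPSSg G (c i) := fun i => hmaxf i.val (le_of_lt (ZMod.val_lt i))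
  have hcinj : Function.Injective c := by
    intro k k' hkk
    rcases lt_trichotomy k.val k'.val with hlt | heq | hgt
    · exact absurd (hdist k.val k'.val hlt (le_of_lt (ZMod.val_lt k')) hkk).2
        (by have := ZMod.val_lt k'; omega)
    · exact ZMod.val_injective N heq
    · exact absurd (hdist k'.val k.val hgt (le_of_lt (ZMod.val_lt k)) hkk.symm).2
        (by have := ZMod.val_lt k; omega)
  have hcarc : ∀ i, QArc G (c i) (c (i + 1)) := by
    intro k
    have hval : (k + 1).val = (k.val + 1) % N := by
      rw [ZMod.val_add, ZMod.val_one]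
    have hk := ZMod.val_lt k
    show QArc G (f k.val) (f (k + 1).val)
    rcases eq_or_lt_of_le (Nat.succ_le_of_lt hk) with heq | hlt
    · have heq' : k.val + 1 = N := heq
      rw [hval, heq', Nat.mod_self, hclosed]
      have h2 := harcf k.val hk
      rwa [heq'] at h2
    · rw [hval, Nat.mod_eq_of_lt hlt]
      exact harcf k.val hk
  exact ⟨N, c, by omega, hcinj,
    fun X => ⟨fun hX => cycle_covers G hdisj N hN2 c hcinj hcmax hcarc X hX,
      fun ⟨i, hi⟩ => hi ▸ hcmax i⟩, hcarc⟩
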